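/- Von Staudt–Clausen theorem: for every even positive integer n, the sum of the n-th Bernoulli number B_n and the sum of 1/p over all primes p such that (p-1) divides n is an integer. -/

import Mathlib

open Finset

namespace VSC
/-- `T n m = ∑_j (-1)^(m+j) C(m,j) j^n`, i.e. `m! * Stirling2(n,m)` up to sign conventions. -/
def T (n m : ℕ) : ℤ := ∑ j ∈ range (m+1), (-1)^(m+j) * (m.choose j) * (j:ℤ)^n

lemma T_zero (m : ℕ) : T 0 m = if m = 0 then 1 else 0 := by
  unfold T
  simp only [pow_zero, mul_one]
  cases m with
  | zero => simp
  | succ m =>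
    rw [if_neg (Nat.succ_ne_zero m)]
    have := Int.alternating_sum_range_choose (n := m+1)
    rw [if_neg (Nat.succ_ne_zero m)] at this
    calc ∑ j ∈ range (m+1+1), (-1:ℤ)^(m+1+j) * ((m+1).choose j)
        = (-1)^(m+1) * ∑ j ∈ range (m+1+1), (-1:ℤ)^j * ((m+1).choose j) := by
          rw [mul_sum]; exact Finset.sum_congr rfl fun j _ => by ring
      _ = 0 := by rw [this, mul_zero]

/-- key Pascal lemma: T n (m+1) + T n m = ∑_i (-1)^(m+i) C(m,i) (i+1)^n -/
lemma T_pascal (n m : ℕ) :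
    T n (m+1) + T n m = ∑ i ∈ range (m+1), (-1:ℤ)^(m+i) * (m.choose i) * ((i:ℤ)+1)^n := by
  have hTm : T n m = ∑ j ∈ range (m+2), (-1:ℤ)^(m+j) * (m.choose j) * (j:ℤ)^n := by
    unfold T
    rw [Finset.sum_range_succ (n := m+1)]
    simp [Nat.choose_succ_self]
  rw [hTm]
  unfold T
  rw [← Finset.sum_add_distrib]
  have : ∀ j ∈ range (m+2),
      (-1:ℤ)^(m+1+j) * ((m+1).choose j) * (j:ℤ)^n + (-1:ℤ)^(m+j) * (m.choose j) * (j:ℤ)^n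
      = (-1:ℤ)^(m+1+j) * (((m+1).choose j : ℤ) - (m.choose j : ℤ)) * (j:ℤ)^n := by
    intro j _
    have : (-1:ℤ)^(m+j) = -(-1:ℤ)^(m+1+j) := by
      rw [show m+1+j = (m+j)+1 by ring, pow_succ]; ring
    rw [this]; ring
  rw [Finset.sum_congr rfl this, Finset.sum_range_succ']
  simp only [Nat.choose_zero_right, Nat.cast_one, sub_self, mul_zero, zero_mul, add_zero]
  refine Finset.sum_congr rfl fun i _ => ?_
  have hch : ((m+1).choose (i+1) : ℤ) - (m.choose (i+1) : ℤ) = (m.choose i : ℤ) := by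
    rw [Nat.choose_succ_succ]; push_cast; ring
  rw [hch]
  have : (-1:ℤ)^(m+1+(i+1)) = (-1:ℤ)^(m+i) := by
    rw [show m+1+(i+1) = (m+i)+2 by ring, pow_succ, pow_succ]; ring
  rw [this]
  push_cast; ring

lemma T_rec (n m : ℕ) : T (n+1) (m+1) = (m+1) * (T n (m+1) + T n m) := by
  rw [T_pascal]
  unfold T
  rw [Finset.sum_range_succ']
  simp only [Nat.cast_zero, zero_pow (Nat.succ_ne_zero n), mul_zero, add_zero]
  rw [Finset.mul_sum]
  refine Finset.sum_congr rfl fun i _ => ?_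
  have key : ((i:ℤ)+1) * ((m+1).choose (i+1) : ℤ) = ((m:ℤ)+1) * (m.choose i : ℤ) := by
    have := Nat.add_one_mul_choose_eq m i
    have : ((m+1) * m.choose i : ℤ) = ((m+1).choose (i+1) * (i+1) : ℤ) := by
      exact_mod_cast congrArg (Nat.cast : ℕ → ℤ) this
    linarith [this]
  have hsign : (-1:ℤ)^(m+1+(i+1)) = (-1:ℤ)^(m+i) := by
    rw [show m+1+(i+1) = (m+i)+2 by ring, pow_succ, pow_succ]; ring
  rw [hsign]
  push_cast
  calc (-1:ℤ)^(m+i) * ((m+1).choose (i+1) : ℤ) * ((i:ℤ)+1)^(n+1)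
      = (-1:ℤ)^(m+i) * ((((i:ℤ)+1) * ((m+1).choose (i+1) : ℤ)) * ((i:ℤ)+1)^n) := by ring
    _ = (-1:ℤ)^(m+i) * ((((m:ℤ)+1) * (m.choose i : ℤ)) * ((i:ℤ)+1)^n) := by rw [key]
    _ = ((m:ℤ)+1) * ((-1)^(m+i) * (m.choose i : ℤ) * ((i:ℤ)+1)^n) := by ring

lemma T_zero_right (n : ℕ) : T n 0 = if n = 0 then 1 else 0 := by
  unfold T
  cases n <;> simp

lemma T_eq_zero_of_lt : ∀ n m, n < m → T n m = 0 := by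
  intro n
  induction n with
  | zero => intro m hm; rw [T_zero, if_neg]; omega
  | succ n ih =>
    intro m hm
    obtain ⟨m', rfl⟩ : ∃ m', m = m' + 1 := ⟨m - 1, by omega⟩
    rw [T_rec, ih (m'+1) (by omega), ih m' (by omega)]
    ring

/-- Stirling numbers of the second kind (as integers). -/
def St : ℕ → ℕ → ℤ
  | 0, 0 => 1
  | 0, _+1 => 0
  | _+1, 0 => 0
  | n+1, m+1 => (m+1) * St n (m+1) + St n m

lemma T_eq_factorial_mul_St : ∀ n m, T n m = (m.factorial : ℤ) * St n m := by
  intro n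
  induction n with
  | zero =>
    intro m
    cases m with
    | zero => simp [T_zero, St]
    | succ m => simp [T_zero, St]
  | succ n ih =>
    intro m
    cases m with
    | zero => simp [T_zero_right, St]
    | succ m =>
      rw [T_rec, St, ih (m+1), ih m]
      rw [Nat.factorial_succ]
      push_cast
      ring


lemma mul_dvd_factorial_of_lt {a b : ℕ} (ha : 1 ≤ a) (hab : a < b) : a * b ∣ b.factorial := by
  obtain ⟨b', rfl⟩ : ∃ b', b = b' + 1 := ⟨b - 1, by omega⟩
  rw [Nat.factorial_succ, mul_comm a (b'+1)]
  exact Nat.mul_dvd_mul_left _ (Nat.dvd_factorial ha (by omega))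

/-- a composite number `c ≠ 4` divides `(c-1)!`. -/
lemma composite_dvd_factorial {c : ℕ} (h2 : 2 ≤ c) (hnp : ¬ c.Prime) (h4 : c ≠ 4) :
    c ∣ (c-1).factorial := by
  obtain ⟨a, ha, ha2, hac⟩ := Nat.exists_dvd_of_not_prime2 h2 hnp
  obtain ⟨b, rfl⟩ := ha
  have hb2 : 2 ≤ b := by
    rcases Nat.lt_or_ge b 2 with h | h
    · interval_cases b <;> omega
    · exact h
  rcases lt_trichotomy a b with hab | rfl | hab
  · have h2b : 2 * b ≤ a * b := Nat.mul_le_mul_right b ha2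
    exact dvd_trans (mul_dvd_factorial_of_lt (by omega) hab)
      (Nat.factorial_dvd_factorial (by omega))
  · have ha3 : 3 ≤ a := by
      rcases Nat.lt_or_ge a 3 with h | h
      · interval_cases a <;> omega
      · exact h
    have key : a * (2 * a) ∣ (2*a).factorial :=
      mul_dvd_factorial_of_lt (by omega) (by omega)
    have h1 : a * a ∣ (2*a).factorial := dvd_trans ⟨2, by ring⟩ key
    have h3a : 3 * a ≤ a * a := Nat.mul_le_mul_right a ha3
    exact dvd_trans h1 (Nat.factorial_dvd_factorial (by omega))
  · rw [mul_comm]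
    have h2a : 2 * a ≤ b * a := Nat.mul_le_mul_right a hb2
    have hcomm : b * a = a * b := Nat.mul_comm b a
    exact dvd_trans (mul_dvd_factorial_of_lt (by omega) hab)
      (Nat.factorial_dvd_factorial (by omega))

lemma choose_prime_sub_one {p : ℕ} [hp : Fact p.Prime] :
    ∀ j, j ≤ p - 1 → (((p-1).choose j : ZMod p)) = (-1)^j := by
  intro j
  induction j with
  | zero => simp
  | succ k ih =>
    intro hk
    have hk' : k ≤ p - 1 := by omega
    have hid := Nat.choose_succ_right_eq (p-1) k
    have hcast : (((p-1).choose (k+1) : ZMod p)) * ((k:ZMod p)+1)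
        = (((p-1).choose k : ZMod p)) * (((p-1-k : ℕ) : ZMod p)) := by
      exact_mod_cast congrArg (Nat.cast : ℕ → ZMod p) hid
    have hsub : (((p-1-k : ℕ)) : ZMod p) = -((k:ZMod p)+1) := by
      have h1 : (p - 1 - k) + (k + 1) = p := by
        have := hp.out.two_le; omega
      have : (((p-1-k : ℕ)) : ZMod p) + ((k:ZMod p)+1) = (p : ZMod p) := by
        rw [show ((k:ZMod p)+1) = (((k+1:ℕ)):ZMod p) by push_cast; ring,
          ← Nat.cast_add, h1]
      rw [ZMod.natCast_self] at this
      linear_combination this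
    have hunit : ((k:ZMod p)+1) ≠ 0 := by
      have : (((k+1 : ℕ)) : ZMod p) ≠ 0 := by
        rw [Ne, ZMod.natCast_eq_zero_iff]
        intro hdvd
        have := Nat.le_of_dvd (by omega) hdvd
        have := hp.out.two_le
        omega
      push_cast at this; exact this
    have := ih hk'
    rw [this, hsub] at hcast
    have : (((p-1).choose (k+1) : ZMod p)) * ((k:ZMod p)+1) = (-1)^(k+1) * ((k:ZMod p)+1) := by
      rw [hcast]; ring
    exact mul_right_cancel₀ hunit this

lemma sum_range_pow_zmod (p : ℕ) [hp : Fact p.Prime] (n : ℕ) (hn : 0 < n) :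
    ∑ j ∈ range p, ((j : ZMod p))^n = if (p - 1) ∣ n then -1 else 0 := by
  classical
  have h1 : ∑ j ∈ range p, ((j : ZMod p))^n = ∑ x : ZMod p, x^n := by
    refine Finset.sum_nbij' (fun j => (j : ZMod p)) (fun x => x.val) ?_ ?_ ?_ ?_ ?_
    · intro a _; exact Finset.mem_univ _
    · intro x _
      exact Finset.mem_range.mpr (ZMod.val_lt x)
    · intro a ha
      exact ZMod.val_cast_of_lt (Finset.mem_range.mp ha)
    · intro x _
      rw [ZMod.natCast_val, ZMod.cast_id]
    · intro a _; rfl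
  rw [h1]
  have h0 : ∑ x : ZMod p, x^n = ∑ x ∈ Finset.univ \ {(0 : ZMod p)}, x^n := by
    rw [← Finset.sum_sdiff ({0} : Finset (ZMod p)).subset_univ, Finset.sum_singleton,
      zero_pow hn.ne', add_zero]
  let φ : (ZMod p)ˣ ↪ ZMod p := ⟨fun x => x, fun _ _ h => Units.ext h⟩
  have hmap : Finset.univ.map φ = Finset.univ \ {0} := by
    ext x
    simp only [Finset.mem_map, Finset.mem_univ, Function.Embedding.coeFn_mk, true_and,
      Finset.mem_sdiff, Finset.mem_singleton, φ]
    exact isUnit_iff_ne_zero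
  have h2 : ∑ x ∈ Finset.univ \ {(0 : ZMod p)}, x^n = ∑ x : (ZMod p)ˣ, (x:ZMod p)^n := by
    rw [← hmap, Finset.sum_map]; rfl
  rw [h0, h2]
  have := FiniteField.sum_pow_units (ZMod p) n
  rwa [ZMod.card p] at this

/-- mod p, `T n (p-1) ≡ (-1)^(p-1) * (if (p-1) ∣ n then -1 else 0)`. -/
lemma T_mod_prime (p n : ℕ) [hp : Fact p.Prime] (hn : 0 < n) :
    ((T n (p-1) : ℤ) : ZMod p) = (-1)^(p-1) * (if (p - 1) ∣ n then -1 else 0) := by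
  have hp1 : p - 1 + 1 = p := by have := hp.out.two_le; omega
  unfold T
  push_cast
  rw [hp1]
  have : ∀ j ∈ range p, ((-1:ZMod p))^(p-1+j) * ((p-1).choose j : ZMod p) * ((j:ZMod p))^n
      = (-1)^(p-1) * ((j:ZMod p))^n := by
    intro j hj
    rw [choose_prime_sub_one j (by have := Finset.mem_range.mp hj; omega), pow_add]
    have hsq : ((-1:ZMod p))^j * ((-1:ZMod p))^j = 1 := by
      rw [← pow_add, ← two_mul, pow_mul]; norm_num
    calc (-1:ZMod p)^(p-1) * (-1)^j * (-1)^j * ((j:ZMod p))^n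
        = (-1:ZMod p)^(p-1) * ((-1)^j * (-1)^j) * ((j:ZMod p))^n := by ring
      _ = (-1)^(p-1) * ((j:ZMod p))^n := by rw [hsq, mul_one]
  rw [Finset.sum_congr rfl this, ← Finset.mul_sum, sum_range_pow_zmod p n hn]

/-- candidate for `bernoulli`. -/
noncomputable def c (k : ℕ) : ℚ := ∑ m ∈ range (k+1), (-1)^m * (T k m : ℚ) / (m+1)

lemma c_ext {k M : ℕ} (h : k ≤ M) :
    c k = ∑ m ∈ range (M+1), (-1:ℚ)^m * (T k m : ℚ) / (m+1) := by
  unfold c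
  refine Finset.sum_subset (Finset.range_subset_range.mpr (by omega)) ?_
  intro m hm hmk
  rw [T_eq_zero_of_lt k m (by simp only [Finset.mem_range] at hmk; omega)]
  simp

lemma binom_sum (N m : ℕ) :
    ∑ k ∈ range (N+1), (N.choose k : ℚ) * (T k m : ℚ)
      = (T N m : ℚ) + (T N (m+1) : ℚ) := by
  have key : ∑ k ∈ range (N+1), (N.choose k : ℚ) * (T k m : ℚ)
      = ∑ j ∈ range (m+1), (-1:ℚ)^(m+j) * (m.choose j) * ((j:ℚ)+1)^N := by
    unfold T
    push_cast
    simp_rw [Finset.mul_sum]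
    rw [Finset.sum_comm]
    refine Finset.sum_congr rfl fun j _ => ?_
    have hb : ((j:ℚ)+1)^N = ∑ k ∈ range (N+1), (j:ℚ)^k * 1^(N-k) * (N.choose k) :=
      add_pow (j:ℚ) 1 N
    rw [hb, Finset.mul_sum]
    refine Finset.sum_congr rfl fun k _ => ?_
    ring
  rw [key]
  have := T_pascal N m
  have hcast : ((T N (m+1) + T N m : ℤ) : ℚ)
      = ((∑ i ∈ range (m+1), (-1:ℤ)^(m+i) * (m.choose i) * ((i:ℤ)+1)^N : ℤ) : ℚ) := by
    exact_mod_cast congrArg (Int.cast : ℤ → ℚ) this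
  push_cast at hcast
  linarith [hcast]

lemma I2 (N : ℕ) :
    ∑ k ∈ range N, (N.choose k : ℚ) * c k = if N = 1 then 1 else 0 := by
  cases N with
  | zero => simp
  | succ N' =>
    set N := N' + 1 with hN
    have h1 : ∑ k ∈ range N, (N.choose k : ℚ) * c k
        = ∑ k ∈ range N, (N.choose k : ℚ) *
            ∑ m ∈ range (N+1), (-1:ℚ)^m * (T k m : ℚ) / (m+1) := by
      refine Finset.sum_congr rfl fun k hk => ?_
      rw [c_ext (show k ≤ N by simp only [Finset.mem_range] at hk; omega)]
    rw [h1]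
    have h2 : ∑ k ∈ range N, (N.choose k : ℚ) *
            ∑ m ∈ range (N+1), (-1:ℚ)^m * (T k m : ℚ) / (m+1)
        = ∑ m ∈ range (N+1), (-1:ℚ)^m / (m+1) *
            ∑ k ∈ range N, (N.choose k : ℚ) * (T k m : ℚ) := by
      simp_rw [Finset.mul_sum]
      rw [Finset.sum_comm]
      refine Finset.sum_congr rfl fun m _ => Finset.sum_congr rfl fun k _ => by ring
    rw [h2]
    have h3 : ∀ m, ∑ k ∈ range N, (N.choose k : ℚ) * (T k m : ℚ) = (T N (m+1) : ℚ) := by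
      intro m
      have := binom_sum N m
      rw [Finset.sum_range_succ, Nat.choose_self] at this
      push_cast at this ⊢
      linarith
    simp_rw [h3]
    -- now ∑ m ∈ range (N+1), (-1)^m / (m+1) * T N (m+1) = if N = 1 then 1 else 0
    cases N' with
    | zero =>
      simp only [T, Finset.sum_range_succ, Finset.sum_range_zero]
      norm_num
    | succ N'' =>
      rw [if_neg (by omega)]
      have h4 : ∀ m, ((-1:ℚ)^m / (m+1)) * (T N (m+1) : ℚ)
          = ((-1:ℚ)^m * (T (N''+1) (m+1) : ℚ) + (-1:ℚ)^m * (T (N''+1) m : ℚ)) := by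
        intro m
        have := T_rec (N''+1) m
        have hc : (T N (m+1) : ℚ) = ((m:ℚ)+1) * ((T (N''+1) (m+1) : ℚ) + (T (N''+1) m : ℚ)) := by
          exact_mod_cast congrArg (Int.cast : ℤ → ℚ) this
        rw [hc]
        have hm1 : ((m:ℚ)+1) ≠ 0 := by positivity
        field_simp
      rw [Finset.sum_congr rfl (fun m _ => h4 m)]
      have h5 : ∀ m, ((-1:ℚ)^m * (T (N''+1) (m+1) : ℚ) + (-1:ℚ)^m * (T (N''+1) m : ℚ))
          = (fun i => (-1:ℚ)^i * (T (N''+1) i : ℚ)) m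
            - (fun i => (-1:ℚ)^i * (T (N''+1) i : ℚ)) (m+1) := by
        intro m
        simp only [pow_succ]
        ring
      rw [Finset.sum_congr rfl (fun m _ => h5 m), Finset.sum_range_sub']
      rw [T_zero_right, if_neg (by omega), T_eq_zero_of_lt (N''+1) (N+1) (by omega)]
      simp

theorem bernoulli_eq_c (n : ℕ) : bernoulli n = c n := by
  induction n using Nat.strong_induction_on with
  | _ n ih =>
    cases n with
    | zero =>
      simp [c, T_zero_right, bernoulli_zero]
    | succ n' =>
      set n := n' + 1 with hn
      have hb := sum_bernoulli (n+1)
      have hc := I2 (n+1)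
      rw [if_neg (by omega)] at hb hc
      rw [Finset.sum_range_succ] at hb hc
      have hsum : ∑ k ∈ range n, ((n+1).choose k : ℚ) * bernoulli k
          = ∑ k ∈ range n, ((n+1).choose k : ℚ) * c k := by
        refine Finset.sum_congr rfl fun k hk => ?_
        rw [ih k (Finset.mem_range.mp hk)]
      have hch : ((n+1).choose n : ℚ) ≠ 0 := by
        rw [Nat.choose_succ_self_right]
        positivity
      have : ((n+1).choose n : ℚ) * bernoulli n = ((n+1).choose n : ℚ) * c n := by
        rw [hsum] at hb
        linarith
      exact mul_left_cancel₀ hch this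

lemma T_eq_factorial_mul_St' (n m : ℕ) : ∃ s : ℤ, T n m = (m.factorial : ℤ) * s :=
  ⟨St n m, T_eq_factorial_mul_St n m⟩

lemma four_dvd_T (n : ℕ) (hn : 0 < n) (hne : Even n) : (4:ℤ) ∣ T n 3 := by
  obtain ⟨k, hk⟩ := hne
  have hk1 : 1 ≤ k := by omega
  have : ((T n 3 : ℤ) : ZMod 4) = 0 := by
    unfold T
    push_cast
    rw [Finset.sum_range_succ, Finset.sum_range_succ, Finset.sum_range_succ,
      Finset.sum_range_succ, Finset.sum_range_zero]
    have h2 : ((2:ZMod 4))^n = 0 := by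
      rw [hk, ← two_mul, pow_mul]
      have : ((2:ZMod 4))^2 = 0 := by decide
      rw [this, zero_pow (by omega)]
    have h3 : ((3:ZMod 4))^n = 1 := by
      rw [hk, ← two_mul, pow_mul]
      have : ((3:ZMod 4))^2 = 1 := by decide
      rw [this, one_pow]
    have h0 : ((0:ZMod 4))^n = 0 := zero_pow hn.ne'
    norm_num [h2, h3, h0]
    decide
  exact_mod_cast (ZMod.intCast_zmod_eq_zero_iff_dvd _ 4).mp this

lemma dvd_T_of_composite {m : ℕ} (n : ℕ) (hn : 0 < n) (hne : Even n)
    (hnp : ¬ (m+1).Prime) : ((m:ℤ)+1) ∣ T n m := by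
  rcases Nat.eq_or_lt_of_le (Nat.zero_le m) with h0 | h0
  · rw [← h0, T_zero_right, if_neg hn.ne']
    simp
  rcases eq_or_ne m 3 with rfl | h3
  · exact_mod_cast four_dvd_T n hn hne
  · have hfd : (m+1) ∣ m.factorial := by
      have := composite_dvd_factorial (c := m+1) (by omega) hnp (by omega)
      simpa using this
    obtain ⟨s, hs⟩ := T_eq_factorial_mul_St' n m
    rw [hs]
    exact_mod_cast Dvd.dvd.mul_right (Int.natCast_dvd_natCast.mpr hfd) s

lemma prime_case_dvd {m : ℕ} (n : ℕ) (hn : 0 < n) (hp : (m+1).Prime) (hd : m ∣ n) :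
    ((m:ℤ)+1) ∣ ((-1)^m * T n m + 1) := by
  haveI : Fact (m+1).Prime := ⟨hp⟩
  have hm1 : (m+1) - 1 = m := by omega
  have := T_mod_prime (m+1) n hn
  rw [hm1, if_pos hd] at this
  have key : (((-1)^m * T n m + 1 : ℤ) : ZMod (m+1)) = 0 := by
    push_cast
    rw [this]
    have hsq : ((-1:ZMod (m+1)))^m * ((-1:ZMod (m+1)))^m = 1 := by
      rw [← pow_add, ← two_mul, pow_mul]; norm_num
    calc (-1:ZMod (m+1))^m * ((-1)^m * -1) + 1
        = -((-1:ZMod (m+1))^m * (-1)^m) + 1 := by ring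
      _ = 0 := by rw [hsq]; ring
  have := (ZMod.intCast_zmod_eq_zero_iff_dvd _ (m+1)).mp key
  exact_mod_cast this

lemma prime_case_ndvd {m : ℕ} (n : ℕ) (hn : 0 < n) (hp : (m+1).Prime) (hd : ¬ m ∣ n) :
    ((m:ℤ)+1) ∣ T n m := by
  haveI : Fact (m+1).Prime := ⟨hp⟩
  have hm1 : (m+1) - 1 = m := by omega
  have := T_mod_prime (m+1) n hn
  rw [hm1, if_neg hd] at this
  have key : ((T n m : ℤ) : ZMod (m+1)) = 0 := by rw [this, mul_zero]
  have := (ZMod.intCast_zmod_eq_zero_iff_dvd _ (m+1)).mp key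
  exact_mod_cast this

end VSC

open VSC Finset in
/-- Von Staudt–Clausen: for even positive `n`, `B_n + ∑_{(p-1) ∣ n, p prime} 1/p` is an integer. -/
theorem von_staudt_clausen (n : ℕ) (hn : 0 < n) (hne : Even n) :
    ∃ z : ℤ, bernoulli n +
      ∑ p ∈ (Finset.range (n + 2)).filter (fun p => p.Prime ∧ (p - 1) ∣ n),
        (1 : ℚ) / p = z := by
  classical
  -- rewrite prime sum as sum over m = p - 1
  have hset : (Finset.range (n + 2)).filter (fun p => p.Prime ∧ (p - 1) ∣ n)
      = ((Finset.range (n+1)).filter (fun m => (m+1).Prime ∧ m ∣ n)).image (· + 1) := by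
    ext p
    simp only [Finset.mem_filter, Finset.mem_range, Finset.mem_image]
    constructor
    · rintro ⟨hlt, hp, hd⟩
      refine ⟨p - 1, ⟨⟨?_, ?_, ?_⟩, ?_⟩⟩
      · have := Nat.le_of_dvd hn hd
        omega
      · have h2 := hp.two_le
        rwa [Nat.sub_add_cancel (by omega)]
      · exact hd
      · have h2 := hp.two_le
        omega
    · rintro ⟨m, ⟨⟨hm, hp, hd⟩, rfl⟩⟩
      have := Nat.le_of_dvd hn hd
      exact ⟨by omega, hp, by simpa using hd⟩
  have hprimesum : ∑ p ∈ (Finset.range (n + 2)).filter (fun p => p.Prime ∧ (p - 1) ∣ n),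
        (1 : ℚ) / p
      = ∑ m ∈ range (n+1), (if (m+1).Prime ∧ m ∣ n then (1:ℚ)/(m+1) else 0) := by
    rw [hset, Finset.sum_image (by intro a _ b _ h; beta_reduce at h; omega), Finset.sum_filter]
    refine Finset.sum_congr rfl fun m _ => ?_
    split <;> push_cast <;> ring_nf
  rw [bernoulli_eq_c, hprimesum, c, ← Finset.sum_add_distrib]
  -- now show the sum of integers is an integer
  have key : ∀ m ∈ range (n+1),
      ((-1:ℚ)^m * (T n m : ℚ) / (m+1) + (if (m+1).Prime ∧ m ∣ n then (1:ℚ)/(m+1) else 0))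
        ∈ (RingHom.range (Int.castRingHom ℚ) : Subring ℚ) := by
    intro m _
    have hm1 : ((m:ℚ)+1) ≠ 0 := by positivity
    by_cases hp : (m+1).Prime
    · by_cases hd : m ∣ n
      · rw [if_pos ⟨hp, hd⟩]
        obtain ⟨z, hz⟩ := prime_case_dvd n hn hp hd
        refine ⟨z, ?_⟩
        have hTz : (T n m : ℚ) = (((m:ℚ)+1) * z - 1) * (-1)^m := by
          have : ((-1:ℚ))^m * (T n m : ℚ) + 1 = ((m:ℚ)+1) * z := by
            exact_mod_cast congrArg (Int.cast : ℤ → ℚ) hz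
          have hsq : ((-1:ℚ))^m * ((-1:ℚ))^m = 1 := by
            rw [← pow_add, ← two_mul, pow_mul]; norm_num
          calc (T n m : ℚ) = (((-1:ℚ))^m * (T n m : ℚ)) * (-1)^m := by
                rw [mul_comm ((-1:ℚ)^m) _, mul_assoc, hsq, mul_one]
            _ = (((m:ℚ)+1) * z - 1) * (-1)^m := by rw [← this]; ring
        rw [eq_intCast, hTz]
        have hsq : ((-1:ℚ))^m * ((-1:ℚ))^m = 1 := by
          rw [← pow_add, ← two_mul, pow_mul]; norm_num
        have h1 : (-1:ℚ)^m * ((((m:ℚ)+1) * (z:ℚ) - 1) * (-1)^m) = ((m:ℚ)+1) * z - 1 := by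
          calc (-1:ℚ)^m * ((((m:ℚ)+1) * (z:ℚ) - 1) * (-1)^m)
              = (((m:ℚ)+1) * (z:ℚ) - 1) * ((-1:ℚ)^m * (-1)^m) := by ring
            _ = _ := by rw [hsq, mul_one]
        rw [mul_div_assoc] at *
        rw [← mul_div_assoc, h1]
        field_simp
        ring
      · rw [if_neg (by tauto), add_zero]
        obtain ⟨z, hz⟩ := prime_case_ndvd n hn hp hd
        refine ⟨(-1)^m * z, ?_⟩
        have : (T n m : ℚ) = ((m:ℚ)+1) * z := by
          exact_mod_cast congrArg (Int.cast : ℤ → ℚ) hz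
        rw [eq_intCast]
        rw [this]
        field_simp
        push_cast
        ring
    · rw [if_neg (by tauto), add_zero]
      obtain ⟨z, hz⟩ := dvd_T_of_composite n hn hne hp
      refine ⟨(-1)^m * z, ?_⟩
      have : (T n m : ℚ) = ((m:ℚ)+1) * z := by
        exact_mod_cast congrArg (Int.cast : ℤ → ℚ) hz
      rw [eq_intCast]
      rw [this]
      field_simp
      push_cast
      ring
  have := Subring.sum_mem _ key
  obtain ⟨z, hz⟩ := this
  exact ⟨z, by rw [← hz]; simp⟩
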